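/- arXiv:1805.05310 — 2 statements merged into one kernel-verified Lean document; each statement's English description precedes it below -/
import Mathlib

section
/- The multicenter vector field $Z = \sum_{j=1}^p \left(-y_j\,\partial/\partial x_j + x_j\,\partial/\partial y_j\right)$ on $\mathbb{R}^{2p}$ ($p \geq 1$) has no real formal separatrix at the origin: there is no nonzero tuple $\gamma \in (t\mathbb{R}[[t]])^{2p}$ and $h \in \mathbb{R}[[t]]$ with $Z(\gamma(t)) = h(t)\,\gamma'(t)$. -/
open PowerSeries

/-- Over `ℝ`, a sum of two squares of power series vanishes only if both vanish. -/
lemma sum_sq_eq_zero_aux (a b : PowerSeries ℝ) (hab : a * a + b * b = 0) :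
    a = 0 ∧ b = 0 := by
  have key : ∀ n, coeff n a = 0 ∧ coeff n b = 0 := by
    intro n
    induction n using Nat.strong_induction_on with
    | _ n ih =>
      have h2n : coeff (n + n) (a * a) + coeff (n + n) (b * b) = 0 := by
        rw [← map_add, hab, map_zero]
      have hdiag : ∀ c : PowerSeries ℝ, (∀ m, m < n → coeff m c = 0) →
          coeff (n + n) (c * c) = coeff n c * coeff n c := by
        intro c hc
        rw [coeff_mul]
        apply Finset.sum_eq_single (n, n)
        · intro ij hij hne
          rw [Finset.HasAntidiagonal.mem_antidiagonal] at hij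
          rcases lt_or_ge ij.1 n with hl | hg
          · rw [hc _ hl, zero_mul]
          · have h2 : ij.2 < n := by
              rcases lt_or_ge ij.2 n with h' | h'
              · exact h'
              · exact absurd (Prod.ext (by omega) (by omega)) hne
            rw [hc _ h2, mul_zero]
        · intro hnot
          simp [Finset.mem_antidiagonal] at hnot
      rw [hdiag a (fun m hm => (ih m hm).1), hdiag b (fun m hm => (ih m hm).2)] at h2n
      have ha0 : coeff n a * coeff n a = 0 := by
        nlinarith [mul_self_nonneg (coeff n a), mul_self_nonneg (coeff n b)]
      have hb0 : coeff n b * coeff n b = 0 := by linarith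
      exact ⟨mul_self_eq_zero.mp ha0, mul_self_eq_zero.mp hb0⟩
  constructor <;> ext n
  · simpa using (key n).1
  · simpa using (key n).2

/-- The multicenter vector field `Z = ∑ⱼ (-yⱼ ∂/∂xⱼ + xⱼ ∂/∂yⱼ)` on `ℝ^{2p}`
(`p ≥ 1`) has no real formal separatrix at the origin: if
`γ = (γⱼ¹, γⱼ²)_{j}` is a tuple of formal power series with zero constant
terms and `h ∈ ℝ[[t]]` satisfies `Z(γ(t)) = h(t) γ'(t)` componentwise, i.e.
`-γⱼ² = h (γⱼ¹)'` and `γⱼ¹ = h (γⱼ²)'` for every `j`, then `γ = 0`. -/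
theorem multicenter_has_no_real_formal_separatrix (p : ℕ) (hp : 0 < p)
    (γ : Fin p → PowerSeries ℝ × PowerSeries ℝ) (h : PowerSeries ℝ)
    (hconst : ∀ j, constantCoeff (γ j).1 = 0 ∧ constantCoeff (γ j).2 = 0)
    (heq : ∀ j, -(γ j).2 = h * derivativeFun (γ j).1 ∧
      (γ j).1 = h * derivativeFun (γ j).2) :
    ∀ j, (γ j).1 = 0 ∧ (γ j).2 = 0 := by
  intro j
  obtain ⟨e1, e2⟩ := heq j
  obtain ⟨c1, c2⟩ := hconst j
  set a := (γ j).1 with ha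
  set b := (γ j).2 with hb
  by_cases hh : h = 0
  · rw [hh, zero_mul] at e1 e2
    exact ⟨e2, neg_eq_zero.mp e1⟩
  · have hf : h * derivativeFun (a * a + b * b) = 0 := by
      rw [derivativeFun_add, derivativeFun_mul, derivativeFun_mul, smul_eq_mul, smul_eq_mul]
      have hcalc : h * ((a * derivativeFun a + a * derivativeFun a) +
          (b * derivativeFun b + b * derivativeFun b)) =
          a * (h * derivativeFun a) + a * (h * derivativeFun a) +
          (b * (h * derivativeFun b) + b * (h * derivativeFun b)) := by ring
      rw [hcalc, ← e1, ← e2]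
      ring
    have hd : derivativeFun (a * a + b * b) = 0 := by
      rcases mul_eq_zero.mp hf with h0 | h0
      · exact absurd h0 hh
      · exact h0
    have hzero : a * a + b * b = 0 := by
      ext n
      cases n with
      | zero =>
        simp only [coeff_zero_eq_constantCoeff, map_add, map_mul, c1, c2, map_zero]
        ring
      | succ n =>
        have hc := congrArg (coeff n) hd
        change coeff n (derivative ℝ (a * a + b * b)) = coeff n 0 at hc
        rw [coeff_derivativeFun, map_zero] at hc
        rcases mul_eq_zero.mp hc with h0 | h0
        · simpa using h0
        · exact absurd h0 (by positivity)
    exact sum_sq_eq_zero_aux a b hzero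
end

section
/- Let $\ell_1,\ell_2,\ell_3$ be linearly independent linear forms on $\mathbb{R}^3$, $m_1,m_2,m_3 > 0$ integers, $K = \{\ell_1,\ell_2,\ell_3 > 0\}$, and $F = \ell_1^{2m_1}\ell_2^{2m_2}\ell_3^{2m_3}$ restricted to $\mathbb{S}^2 \cap K$. Then $F$ attains a maximum on $\mathbb{S}^2 \cap \overline{K}$ at a point of $\mathbb{S}^2 \cap K$, and any critical point $\nu_0$ of $F|_{\mathbb{S}^2 \cap K}$ is a global maximum of $F$ on $\mathbb{S}^2 \cap K$; in particular $F|_{\mathbb{S}^2\cap K}$ has exactly one critical point. -/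
noncomputable section

theorem aux_amgm3 {n : Fin 3 → ℕ} (hn : ∀ i, 0 < n i) {a : Fin 3 → ℝ} (ha : ∀ i, 0 < a i)
    {t : ℝ} (hsum : (n 0 : ℝ) * a 0 + (n 1 : ℝ) * a 1 + (n 2 : ℝ) * a 2
      = ((n 0 + n 1 + n 2 : ℕ) : ℝ) * t) :
    a 0 ^ (n 0) * (a 1 ^ (n 1) * a 2 ^ (n 2)) ≤ t ^ (n 0 + n 1 + n 2) ∧ 0 < t := by
  set d : ℕ := n 0 + n 1 + n 2 with hd
  have hdpos : (0 : ℝ) < (d : ℝ) := by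
    have h0 := hn 0
    have : 0 < d := by omega
    exact_mod_cast this
  have ht : 0 < t := by
    have h1 : (0:ℝ) < (n 0 : ℝ) * a 0 + (n 1 : ℝ) * a 1 + (n 2 : ℝ) * a 2 := by
      have h0 : (1:ℝ) ≤ (n 0 : ℝ) := by exact_mod_cast (hn 0)
      have := ha 0; have := ha 1; have := ha 2
      nlinarith [Nat.cast_nonneg (α := ℝ) (n 1), Nat.cast_nonneg (α := ℝ) (n 2)]
    rw [hsum] at h1
    nlinarith
  refine ⟨?_, ht⟩
  set w : Fin 3 → ℝ := fun i => (n i : ℝ) / d with hw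
  have hw0 : ∀ i, 0 ≤ w i := fun i => by positivity
  have hwsum : w 0 + w 1 + w 2 = 1 := by
    simp only [hw]
    field_simp
    push_cast [hd]; ring
  have geom : a 0 ^ w 0 * a 1 ^ w 1 * a 2 ^ w 2 ≤ w 0 * a 0 + w 1 * a 1 + w 2 * a 2 :=
    Real.geom_mean_le_arith_mean3_weighted (hw0 0) (hw0 1) (hw0 2)
      (ha 0).le (ha 1).le (ha 2).le hwsum
  have harith : w 0 * a 0 + w 1 * a 1 + w 2 * a 2 = t := by
    have : (d:ℝ) ≠ 0 := ne_of_gt hdpos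
    simp only [hw]
    field_simp
    linarith [hsum]
  rw [harith] at geom
  have hpowle := Real.rpow_le_rpow (mul_nonneg (mul_nonneg (Real.rpow_nonneg (ha 0).le _) (Real.rpow_nonneg (ha 1).le _)) (Real.rpow_nonneg (ha 2).le _)) geom (le_of_lt hdpos)
  have hlhs : (a 0 ^ w 0 * a 1 ^ w 1 * a 2 ^ w 2) ^ (d : ℝ)
      = a 0 ^ (n 0) * (a 1 ^ (n 1) * a 2 ^ (n 2)) := by
    have hwd : ∀ i, w i * (d:ℝ) = (n i : ℝ) := fun i => by
      simp only [hw]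
      field_simp
    rw [Real.mul_rpow (mul_nonneg (Real.rpow_nonneg (ha 0).le _) (Real.rpow_nonneg (ha 1).le _)) (Real.rpow_nonneg (ha 2).le _),
        Real.mul_rpow (Real.rpow_nonneg (ha 0).le _) (Real.rpow_nonneg (ha 1).le _),
        ← Real.rpow_natCast (a 0) (n 0), ← Real.rpow_natCast (a 1) (n 1),
        ← Real.rpow_natCast (a 2) (n 2),
        ← Real.rpow_mul (ha 0).le, ← Real.rpow_mul (ha 1).le, ← Real.rpow_mul (ha 2).le,
        hwd 0, hwd 1, hwd 2]
    ring
  have hrhs : t ^ (d : ℝ) = t ^ d := by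
    rw [Real.rpow_natCast]
  rw [hlhs, hrhs] at hpowle
  exact hpowle

theorem aux_core3 {n : Fin 3 → ℕ} (hn : ∀ i, 0 < n i) {l b : Fin 3 → ℝ}
    (hl : ∀ i, 0 < l i) (hb : ∀ i, 0 < b i) {t : ℝ}
    (hsum : (n 0 : ℝ) * l 0 ^ (n 0 - 1) * (l 1 ^ n 1 * l 2 ^ n 2) * b 0
          + (n 1 : ℝ) * l 1 ^ (n 1 - 1) * (l 0 ^ n 0 * l 2 ^ n 2) * b 1
          + (n 2 : ℝ) * l 2 ^ (n 2 - 1) * (l 0 ^ n 0 * l 1 ^ n 1) * b 2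
        = ((n 0 + n 1 + n 2 : ℕ) : ℝ) * (l 0 ^ n 0 * (l 1 ^ n 1 * l 2 ^ n 2)) * t) :
    b 0 ^ n 0 * (b 1 ^ n 1 * b 2 ^ n 2)
      ≤ t ^ (n 0 + n 1 + n 2) * (l 0 ^ n 0 * (l 1 ^ n 1 * l 2 ^ n 2)) ∧ 0 < t := by
  set a : Fin 3 → ℝ := fun i => b i / l i with hadef
  have ha : ∀ i, 0 < a i := fun i => div_pos (hb i) (hl i)
  have hP : 0 < l 0 ^ n 0 * (l 1 ^ n 1 * l 2 ^ n 2) := by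
    have := hl 0; have := hl 1; have := hl 2; positivity
  have hfac : ∀ i, l i ^ (n i - 1) * b i = l i ^ n i * a i := by
    intro i
    have h1 : l i ^ (n i - 1) * l i = l i ^ n i := pow_sub_one_mul (hn i).ne' (l i)
    have h2 : b i = l i * a i := by
      rw [hadef]
      simp only []
      exact (mul_div_cancel₀ (b i) (hl i).ne').symm
    calc l i ^ (n i - 1) * b i = (l i ^ (n i - 1) * l i) * a i := by rw [h2]; ring
      _ = l i ^ n i * a i := by rw [h1]
  have hsum' : (n 0 : ℝ) * a 0 + (n 1 : ℝ) * a 1 + (n 2 : ℝ) * a 2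
      = ((n 0 + n 1 + n 2 : ℕ) : ℝ) * t := by
    have e : (l 0 ^ n 0 * (l 1 ^ n 1 * l 2 ^ n 2))
        * ((n 0 : ℝ) * a 0 + (n 1 : ℝ) * a 1 + (n 2 : ℝ) * a 2)
        = (l 0 ^ n 0 * (l 1 ^ n 1 * l 2 ^ n 2)) * (((n 0 + n 1 + n 2 : ℕ) : ℝ) * t) := by
      calc (l 0 ^ n 0 * (l 1 ^ n 1 * l 2 ^ n 2))
            * ((n 0 : ℝ) * a 0 + (n 1 : ℝ) * a 1 + (n 2 : ℝ) * a 2)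
          = (n 0 : ℝ) * (l 1 ^ n 1 * l 2 ^ n 2) * (l 0 ^ n 0 * a 0)
          + (n 1 : ℝ) * (l 0 ^ n 0 * l 2 ^ n 2) * (l 1 ^ n 1 * a 1)
          + (n 2 : ℝ) * (l 0 ^ n 0 * l 1 ^ n 1) * (l 2 ^ n 2 * a 2) := by ring
        _ = (n 0 : ℝ) * l 0 ^ (n 0 - 1) * (l 1 ^ n 1 * l 2 ^ n 2) * b 0
          + (n 1 : ℝ) * l 1 ^ (n 1 - 1) * (l 0 ^ n 0 * l 2 ^ n 2) * b 1
          + (n 2 : ℝ) * l 2 ^ (n 2 - 1) * (l 0 ^ n 0 * l 1 ^ n 1) * b 2 := by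
            rw [← hfac 0, ← hfac 1, ← hfac 2]; ring
        _ = (l 0 ^ n 0 * (l 1 ^ n 1 * l 2 ^ n 2)) * (((n 0 + n 1 + n 2 : ℕ) : ℝ) * t) := by
            rw [hsum]; ring
    exact mul_left_cancel₀ hP.ne' e
  obtain ⟨hle, ht⟩ := aux_amgm3 hn ha hsum'
  refine ⟨?_, ht⟩
  have hbi : ∀ i, b i ^ n i = a i ^ n i * l i ^ n i := by
    intro i
    rw [← mul_pow]
    congr 1
    rw [hadef]
    simp only []
    exact (div_mul_cancel₀ (b i) (hl i).ne').symm
  calc b 0 ^ n 0 * (b 1 ^ n 1 * b 2 ^ n 2)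
      = (a 0 ^ n 0 * (a 1 ^ n 1 * a 2 ^ n 2)) * (l 0 ^ n 0 * (l 1 ^ n 1 * l 2 ^ n 2)) := by
        rw [hbi 0, hbi 1, hbi 2]; ring
    _ ≤ t ^ (n 0 + n 1 + n 2) * (l 0 ^ n 0 * (l 1 ^ n 1 * l 2 ^ n 2)) :=
        mul_le_mul_of_nonneg_right hle hP.le

theorem aux_deriv (L : Fin 3 → (EuclideanSpace ℝ (Fin 3) →L[ℝ] ℝ)) (n : Fin 3 → ℕ)
    (x : EuclideanSpace ℝ (Fin 3)) :
    HasStrictFDerivAt (fun x => L 0 x ^ n 0 * L 1 x ^ n 1 * L 2 x ^ n 2)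
      ((((n 0 : ℝ) * L 0 x ^ (n 0 - 1) * (L 1 x ^ n 1 * L 2 x ^ n 2)) • L 0
        + ((n 1 : ℝ) * L 1 x ^ (n 1 - 1) * (L 0 x ^ n 0 * L 2 x ^ n 2)) • L 1)
        + ((n 2 : ℝ) * L 2 x ^ (n 2 - 1) * (L 0 x ^ n 0 * L 1 x ^ n 1)) • L 2) x := by
  have h : ∀ i, HasStrictFDerivAt (fun x => L i x ^ n i)
      (((n i : ℝ) * L i x ^ (n i - 1)) • L i) x := fun i =>
    (hasStrictDerivAt_pow (n i) (L i x)).comp_hasStrictFDerivAt x (L i).hasStrictFDerivAt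
  have h012 := ((h 0).mul (h 1)).mul (h 2)
  refine HasStrictFDerivAt.congr_fderiv h012 ?_
  ext y
  simp only [ContinuousLinearMap.add_apply, ContinuousLinearMap.coe_smul',
    Pi.smul_apply, smul_eq_mul]
  simp only [Pi.mul_apply]
  ring

set_option maxHeartbeats 1000000 in
/-- Let `ℓ₁, ℓ₂, ℓ₃` be linearly independent linear forms on `ℝ³`,
`m₁, m₂, m₃ > 0` integers, `K = {ℓ₁, ℓ₂, ℓ₃ > 0}` and
`F = ℓ₁^{2m₁} ℓ₂^{2m₂} ℓ₃^{2m₃}`. Then `F` attains a maximum on `𝕊² ∩ K̄` at a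
point of `𝕊² ∩ K`; every critical point of `F|_{𝕊² ∩ K}` (a point where the
gradient of `F` is proportional to the point) is a global maximum of `F` on
`𝕊² ∩ K`; and `F|_{𝕊² ∩ K}` has exactly one critical point. -/
theorem sphere_restriction_unique_critical_point
    (ℓ : Fin 3 → (EuclideanSpace ℝ (Fin 3) →ₗ[ℝ] ℝ))
    (hind : LinearIndependent ℝ ℓ) (m : Fin 3 → ℕ) (hm : ∀ i, 0 < m i) :
    let S := Metric.sphere (0 : EuclideanSpace ℝ (Fin 3)) 1
    let K := {x : EuclideanSpace ℝ (Fin 3) | ∀ i, 0 < ℓ i x}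
    let Kbar := {x : EuclideanSpace ℝ (Fin 3) | ∀ i, 0 ≤ ℓ i x}
    let F : EuclideanSpace ℝ (Fin 3) → ℝ := fun x => ∏ i, (ℓ i x) ^ (2 * m i)
    (∃ ν₀ ∈ S ∩ K, IsMaxOn F (S ∩ Kbar) ν₀) ∧
    (∀ ν₀ ∈ S ∩ K, (∃ lam : ℝ, gradient F ν₀ = lam • ν₀) →
      IsMaxOn F (S ∩ K) ν₀) ∧
    (∃! ν₀, ν₀ ∈ S ∩ K ∧ ∃ lam : ℝ, gradient F ν₀ = lam • ν₀) := by
  intro S K Kbar F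
  set L : Fin 3 → (EuclideanSpace ℝ (Fin 3) →L[ℝ] ℝ) := fun i => (ℓ i).toContinuousLinearMap with hLdef
  have hLa : ∀ (i : Fin 3) (x : EuclideanSpace ℝ (Fin 3)), L i x = ℓ i x := fun i x => rfl
  set n : Fin 3 → ℕ := fun i => 2 * m i with hndef
  have hn0 : ∀ i, 0 < n i := fun i => by show 0 < 2 * m i; have := hm i; omega
  set d : ℕ := n 0 + n 1 + n 2 with hddef
  have hFeq : F = fun x => L 0 x ^ n 0 * L 1 x ^ n 1 * L 2 x ^ n 2 := by
    funext x
    show (∏ i, (ℓ i x) ^ (2 * m i)) = L 0 x ^ n 0 * L 1 x ^ n 1 * L 2 x ^ n 2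
    rw [Fin.prod_univ_three]
    simp only [hLa, hndef]
  have hF' : ∀ x : EuclideanSpace ℝ (Fin 3), HasStrictFDerivAt F
      ((((n 0 : ℝ) * L 0 x ^ (n 0 - 1) * (L 1 x ^ n 1 * L 2 x ^ n 2)) • L 0
        + ((n 1 : ℝ) * L 1 x ^ (n 1 - 1) * (L 0 x ^ n 0 * L 2 x ^ n 2)) • L 1)
        + ((n 2 : ℝ) * L 2 x ^ (n 2 - 1) * (L 0 x ^ n 0 * L 1 x ^ n 1)) • L 2) x := by
    rw [hFeq]
    exact fun x => aux_deriv L n x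
  have heval : ∀ z y : EuclideanSpace ℝ (Fin 3), fderiv ℝ F z y
      = (n 0 : ℝ) * (ℓ 0 z) ^ (n 0 - 1) * ((ℓ 1 z) ^ n 1 * (ℓ 2 z) ^ n 2) * (ℓ 0 y)
      + (n 1 : ℝ) * (ℓ 1 z) ^ (n 1 - 1) * ((ℓ 0 z) ^ n 0 * (ℓ 2 z) ^ n 2) * (ℓ 1 y)
      + (n 2 : ℝ) * (ℓ 2 z) ^ (n 2 - 1) * ((ℓ 0 z) ^ n 0 * (ℓ 1 z) ^ n 1) * (ℓ 2 y) := by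
    intro z y
    rw [(hF' z).hasFDerivAt.fderiv]
    simp only [ContinuousLinearMap.add_apply, ContinuousLinearMap.coe_smul',
      Pi.smul_apply, smul_eq_mul, hLa]
  have hFval : ∀ z : EuclideanSpace ℝ (Fin 3), F z = (ℓ 0 z) ^ n 0 * ((ℓ 1 z) ^ n 1 * (ℓ 2 z) ^ n 2) := by
    intro z
    rw [hFeq]
    simp only [hLa]
    ring
  have hFcont : Continuous F := by
    rw [continuous_iff_continuousAt]
    exact fun x => (hF' x).continuousAt
  have hFpos : ∀ z ∈ K, 0 < F z := by
    intro z hz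
    rw [hFval]
    have := hz 0; have := hz 1; have := hz 2
    positivity
  have hgrad_iff : ∀ (z : EuclideanSpace ℝ (Fin 3)) (lam : ℝ),
      gradient F z = lam • z ↔ ∀ y : EuclideanSpace ℝ (Fin 3), fderiv ℝ F z y = lam * (inner ℝ z y : ℝ) := by
    intro z lam
    have hgd : gradient F z = (InnerProductSpace.toDual ℝ (EuclideanSpace ℝ (Fin 3))).symm (fderiv ℝ F z) := rfl
    constructor
    · intro h y
      have h1 : (inner ℝ (gradient F z) y : ℝ) = fderiv ℝ F z y := by
        rw [hgd]
        exact InnerProductSpace.toDual_symm_apply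
      rw [← h1, h, real_inner_smul_left]
    · intro h
      have h2 : (InnerProductSpace.toDual ℝ (EuclideanSpace ℝ (Fin 3))) (lam • z)
          = fderiv ℝ F z := by
        ext y
        rw [InnerProductSpace.toDual_apply_apply, real_inner_smul_left, ← h y]
      rw [hgd, ← h2, LinearIsometryEquiv.symm_apply_apply]
  -- key inequality at critical points
  have hkey : ∀ ν₀, ν₀ ∈ S ∩ K → (∃ lam : ℝ, gradient F ν₀ = lam • ν₀) →
      ∀ x, x ∈ S ∩ K →
        F x ≤ (inner ℝ ν₀ x : ℝ) ^ d * F ν₀ ∧ 0 < (inner ℝ ν₀ x : ℝ) := by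
    intro ν₀ ⟨hν₀S, hν₀K⟩ ⟨lam, hg⟩ x ⟨hxS, hxK⟩
    have hfe := (hgrad_iff ν₀ lam).1 hg
    have hinner1 : (inner ℝ ν₀ ν₀ : ℝ) = 1 := by
      rw [real_inner_self_eq_norm_mul_norm, mem_sphere_zero_iff_norm.1 hν₀S]
      norm_num
    have e0 : (ℓ 0 ν₀) ^ (n 0 - 1) * (ℓ 0 ν₀) = (ℓ 0 ν₀) ^ (n 0) :=
      pow_sub_one_mul (hn0 0).ne' _
    have e1 : (ℓ 1 ν₀) ^ (n 1 - 1) * (ℓ 1 ν₀) = (ℓ 1 ν₀) ^ (n 1) :=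
      pow_sub_one_mul (hn0 1).ne' _
    have e2 : (ℓ 2 ν₀) ^ (n 2 - 1) * (ℓ 2 ν₀) = (ℓ 2 ν₀) ^ (n 2) :=
      pow_sub_one_mul (hn0 2).ne' _
    have h2 : (n 0 : ℝ) * (ℓ 0 ν₀) ^ (n 0 - 1) * ((ℓ 1 ν₀) ^ n 1 * (ℓ 2 ν₀) ^ n 2) * (ℓ 0 ν₀)
      + (n 1 : ℝ) * (ℓ 1 ν₀) ^ (n 1 - 1) * ((ℓ 0 ν₀) ^ n 0 * (ℓ 2 ν₀) ^ n 2) * (ℓ 1 ν₀)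
      + (n 2 : ℝ) * (ℓ 2 ν₀) ^ (n 2 - 1) * ((ℓ 0 ν₀) ^ n 0 * (ℓ 1 ν₀) ^ n 1) * (ℓ 2 ν₀)
        = lam := by
      rw [← heval ν₀ ν₀, hfe ν₀, hinner1, mul_one]
    have hlam : lam = ((d : ℕ) : ℝ)
        * ((ℓ 0 ν₀) ^ n 0 * ((ℓ 1 ν₀) ^ n 1 * (ℓ 2 ν₀) ^ n 2)) := by
      rw [hddef]
      push_cast
      linear_combination (-1 : ℝ) * h2
        + (n 0 : ℝ) * ((ℓ 1 ν₀) ^ n 1 * (ℓ 2 ν₀) ^ n 2) * e0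
        + (n 1 : ℝ) * ((ℓ 0 ν₀) ^ n 0 * (ℓ 2 ν₀) ^ n 2) * e1
        + (n 2 : ℝ) * ((ℓ 0 ν₀) ^ n 0 * (ℓ 1 ν₀) ^ n 1) * e2
    have hsum : (n 0 : ℝ) * (ℓ 0 ν₀) ^ (n 0 - 1) * ((ℓ 1 ν₀) ^ n 1 * (ℓ 2 ν₀) ^ n 2) * (ℓ 0 x)
        + (n 1 : ℝ) * (ℓ 1 ν₀) ^ (n 1 - 1) * ((ℓ 0 ν₀) ^ n 0 * (ℓ 2 ν₀) ^ n 2) * (ℓ 1 x)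
        + (n 2 : ℝ) * (ℓ 2 ν₀) ^ (n 2 - 1) * ((ℓ 0 ν₀) ^ n 0 * (ℓ 1 ν₀) ^ n 1) * (ℓ 2 x)
        = ((n 0 + n 1 + n 2 : ℕ) : ℝ)
          * ((ℓ 0 ν₀) ^ n 0 * ((ℓ 1 ν₀) ^ n 1 * (ℓ 2 ν₀) ^ n 2)) * (inner ℝ ν₀ x : ℝ) := by
      rw [← heval ν₀ x, hfe x, hlam, hddef]
    have hres := aux_core3 (n := n) (l := fun i => ℓ i ν₀) (b := fun i => ℓ i x)
      hn0 (fun i => hν₀K i) (fun i => hxK i) hsum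
    rw [hFval x, hFval ν₀]
    exact ⟨by rw [hddef]; exact hres.1, hres.2⟩
  -- Part 2
  have part2 : ∀ ν₀, ν₀ ∈ S ∩ K → (∃ lam : ℝ, gradient F ν₀ = lam • ν₀) →
      IsMaxOn F (S ∩ K) ν₀ := by
    intro ν₀ hν₀ hcrit
    intro x hx
    obtain ⟨hle, htpos⟩ := hkey ν₀ hν₀ hcrit x hx
    have ht1 : (inner ℝ ν₀ x : ℝ) ≤ 1 := by
      have := real_inner_le_norm ν₀ x
      rw [mem_sphere_zero_iff_norm.1 hν₀.1, mem_sphere_zero_iff_norm.1 hx.1] at this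
      linarith
    have hFν₀ : 0 < F ν₀ := hFpos ν₀ hν₀.2
    calc F x ≤ (inner ℝ ν₀ x : ℝ) ^ d * F ν₀ := hle
      _ ≤ 1 * F ν₀ := by
          apply mul_le_mul_of_nonneg_right _ hFν₀.le
          exact pow_le_one₀ htpos.le ht1
      _ = F ν₀ := one_mul _
  -- Part 1 : existence of maximum
  have hKbar_closed : IsClosed Kbar := by
    have : Kbar = ⋂ i, (L i) ⁻¹' (Set.Ici 0) := by
      ext x
      simp [Kbar, hLa]
    rw [this]
    exact isClosed_iInter fun i => (isClosed_Ici).preimage (L i).continuous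
  have hKopen : IsOpen K := by
    have : K = ⋂ i, (L i) ⁻¹' (Set.Ioi 0) := by
      ext x
      simp [K, hLa]
    rw [this]
    exact isOpen_iInter_of_finite fun i => (isOpen_Ioi).preimage (L i).continuous
  have hcompact : IsCompact (S ∩ Kbar) :=
    (isCompact_sphere 0 1).inter_right hKbar_closed
  -- nonemptiness
  have hKS_ne : (S ∩ K).Nonempty := by
    have hspan : Submodule.span ℝ (Set.range ℓ) = ⊤ := by
      apply hind.span_eq_top_of_card_eq_finrank
      rw [Fintype.card_fin, Subspace.dual_finrank_eq, finrank_euclideanSpace_fin]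
    have hker : ∀ x : EuclideanSpace ℝ (Fin 3), (∀ i, ℓ i x = 0) → x = 0 := by
      intro x hx
      rw [← Module.forall_dual_apply_eq_zero_iff ℝ x]
      intro φ
      have hφ : φ ∈ Submodule.span ℝ (Set.range ℓ) := by rw [hspan]; trivial
      induction hφ using Submodule.span_induction with
      | mem ψ hψ => obtain ⟨i, rfl⟩ := hψ; exact hx i
      | zero => simp
      | add ψ χ _ _ h1 h2 => simp [h1, h2]
      | smul c ψ _ h1 => simp [h1]
    have hinj : Function.Injective (LinearMap.pi ℓ) := by
      rw [← LinearMap.ker_eq_bot, LinearMap.ker_eq_bot']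
      intro x hx
      apply hker
      intro i
      exact congrFun hx i
    have hsurj : Function.Surjective (LinearMap.pi ℓ) := by
      rw [← LinearMap.injective_iff_surjective_of_finrank_eq_finrank (by simp)]
      exact hinj
    obtain ⟨x₀, hx₀⟩ := hsurj (fun _ => 1)
    have hx₀i : ∀ i, ℓ i x₀ = 1 := fun i => congrFun hx₀ i
    have hx₀ne : x₀ ≠ 0 := by
      intro h
      have := hx₀i 0
      rw [h] at this
      simp at this
    refine ⟨(‖x₀‖⁻¹ : ℝ) • x₀, ?_, ?_⟩
    · simp [S, norm_smul, norm_ne_zero_iff.2 hx₀ne,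
        inv_mul_cancel₀ (norm_ne_zero_iff.2 hx₀ne)]
    · intro i
      rw [map_smul]
      simp only [smul_eq_mul, hx₀i i, mul_one]
      exact inv_pos.2 (norm_pos_iff.2 hx₀ne)
  obtain ⟨ν₁, hν₁SK⟩ := hKS_ne
  have hν₁SKbar : ν₁ ∈ S ∩ Kbar := ⟨hν₁SK.1, fun i => (hν₁SK.2 i).le⟩
  obtain ⟨ν₀, hν₀mem, hν₀max⟩ :=
    hcompact.exists_isMaxOn ⟨ν₁, hν₁SKbar⟩ (hFcont.continuousOn)
  have hν₀K : ν₀ ∈ K := by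
    have hFν₀pos : 0 < F ν₀ :=
      lt_of_lt_of_le (hFpos ν₁ hν₁SK.2) (hν₀max hν₁SKbar)
    intro i
    rcases lt_or_eq_of_le (hν₀mem.2 i) with h | h
    · exact h
    · exfalso
      have : F ν₀ = 0 := by
        show (∏ j, (ℓ j ν₀) ^ (2 * m j)) = 0
        refine Finset.prod_eq_zero (Finset.mem_univ i) ?_
        rw [← h]
        exact zero_pow (by have := hm i; omega)
      rw [this] at hFν₀pos
      exact lt_irrefl _ hFν₀pos
  have hν₀SK : ν₀ ∈ S ∩ K := ⟨hν₀mem.1, hν₀K⟩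
  -- Part 3 existence : Lagrange multipliers
  have hcrit₀ : ∃ lam : ℝ, gradient F ν₀ = lam • ν₀ := by
    set g : EuclideanSpace ℝ (Fin 3) → ℝ := fun x => (inner ℝ x x : ℝ) with hgdef
    have hg' : HasStrictFDerivAt g
        ((fderivInnerCLM ℝ (ν₀, ν₀)).comp
          ((ContinuousLinearMap.id ℝ (EuclideanSpace ℝ (Fin 3))).prod (ContinuousLinearMap.id ℝ (EuclideanSpace ℝ (Fin 3))))) ν₀ :=
      (hasStrictFDerivAt_id ν₀).inner ℝ (hasStrictFDerivAt_id ν₀)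
    have hgval : ∀ y : EuclideanSpace ℝ (Fin 3), ((fderivInnerCLM ℝ (ν₀, ν₀)).comp
        ((ContinuousLinearMap.id ℝ (EuclideanSpace ℝ (Fin 3))).prod (ContinuousLinearMap.id ℝ (EuclideanSpace ℝ (Fin 3))))) y
        = 2 * (inner ℝ ν₀ y : ℝ) := by
      intro y
      rw [ContinuousLinearMap.comp_apply]
      have e : ((ContinuousLinearMap.id ℝ (EuclideanSpace ℝ (Fin 3))).prod
          (ContinuousLinearMap.id ℝ (EuclideanSpace ℝ (Fin 3)))) y = (y, y) := rfl
      rw [e, fderivInnerCLM_apply]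
      show (inner ℝ ν₀ y : ℝ) + (inner ℝ y ν₀ : ℝ) = 2 * (inner ℝ ν₀ y : ℝ)
      rw [real_inner_comm y ν₀]
      ring
    have hset : {x : EuclideanSpace ℝ (Fin 3) | g x = g ν₀} = S := by
      ext x
      simp only [hgdef, Set.mem_setOf_eq]
      rw [real_inner_self_eq_norm_mul_norm, real_inner_self_eq_norm_mul_norm,
        mem_sphere_zero_iff_norm.1 hν₀mem.1]
      constructor
      · intro h
        have hx : ‖x‖ = 1 := by nlinarith [norm_nonneg x]
        exact mem_sphere_zero_iff_norm.2 hx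
      · intro h
        rw [mem_sphere_zero_iff_norm.1 h]
    have hextr : IsLocalExtrOn F {x : EuclideanSpace ℝ (Fin 3) | g x = g ν₀} ν₀ := by
      right
      rw [hset]
      have hKnhds : K ∈ nhdsWithin ν₀ S :=
        mem_nhdsWithin_of_mem_nhds (hKopen.mem_nhds hν₀K)
      filter_upwards [hKnhds, self_mem_nhdsWithin] with x hxK hxS
      exact hν₀max ⟨hxS, fun i => (hxK i).le⟩
    obtain ⟨a, b, hab, h0⟩ :=
      hextr.exists_multipliers_of_hasStrictFDerivAt_1d hg' (hF' ν₀)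
    have hb : b ≠ 0 := by
      intro hb0
      rw [hb0] at h0 hab
      have ha : a ≠ 0 := by
        intro ha0
        rw [ha0] at hab
        exact hab rfl
      have := ContinuousLinearMap.ext_iff.1 h0 ν₀
      rw [ContinuousLinearMap.add_apply, ContinuousLinearMap.smul_apply,
        ContinuousLinearMap.smul_apply, ContinuousLinearMap.zero_apply] at this
      rw [smul_eq_mul, smul_eq_mul] at this
      rw [hgval ν₀] at this
      have hinner1 : (inner ℝ ν₀ ν₀ : ℝ) = 1 := by
        rw [real_inner_self_eq_norm_mul_norm, mem_sphere_zero_iff_norm.1 hν₀mem.1]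
        norm_num
      rw [hinner1] at this
      simp at this
      exact ha this
    refine ⟨-(a / b) * 2, (hgrad_iff ν₀ _).2 ?_⟩
    intro y
    have := ContinuousLinearMap.ext_iff.1 h0 y
    rw [ContinuousLinearMap.add_apply, ContinuousLinearMap.smul_apply,
      ContinuousLinearMap.smul_apply, ContinuousLinearMap.zero_apply] at this
    rw [smul_eq_mul, smul_eq_mul] at this
    rw [hgval y] at this
    have hthis : a * (2 * (inner ℝ ν₀ y : ℝ)) + b * fderiv ℝ F ν₀ y = 0 := by
      rw [(hF' ν₀).hasFDerivAt.fderiv]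
      exact this
    apply mul_left_cancel₀ hb
    have hrhs : b * (-(a / b) * 2 * (inner ℝ ν₀ y : ℝ)) = -(a * (2 * (inner ℝ ν₀ y : ℝ))) := by
      field_simp
    rw [hrhs]
    linear_combination hthis
  -- assemble
  refine ⟨⟨ν₀, hν₀SK, hν₀max⟩, part2, ⟨ν₀, ⟨hν₀SK, hcrit₀⟩, ?_⟩⟩
  rintro ν₂ ⟨hν₂SK, hcrit₂⟩
  by_contra hne
  have hmax₂ := part2 ν₂ hν₂SK hcrit₂
  obtain ⟨hle, htpos⟩ := hkey ν₂ hν₂SK hcrit₂ ν₀ hν₀SK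
  have ht1 : (inner ℝ ν₂ ν₀ : ℝ) < 1 := by
    have hpos : (0:ℝ) < (inner ℝ (ν₂ - ν₀) (ν₂ - ν₀) : ℝ) := by
      rw [real_inner_self_eq_norm_mul_norm]
      have hsub : ν₂ - ν₀ ≠ 0 := sub_ne_zero.2 hne
      exact mul_pos (norm_pos_iff.2 hsub) (norm_pos_iff.2 hsub)
    rw [inner_sub_sub_self] at hpos
    have h22 : (inner ℝ ν₂ ν₂ : ℝ) = 1 := by
      rw [real_inner_self_eq_norm_mul_norm, mem_sphere_zero_iff_norm.1 hν₂SK.1]; norm_num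
    have h00 : (inner ℝ ν₀ ν₀ : ℝ) = 1 := by
      rw [real_inner_self_eq_norm_mul_norm, mem_sphere_zero_iff_norm.1 hν₀SK.1]; norm_num
    have hcomm : (inner ℝ ν₀ ν₂ : ℝ) = (inner ℝ ν₂ ν₀ : ℝ) := real_inner_comm _ _
    rw [h22, h00, hcomm] at hpos
    linarith
  have hFν₂pos : 0 < F ν₂ := hFpos ν₂ hν₂SK.2
  have hlt : F ν₀ < F ν₂ := by
    calc F ν₀ ≤ (inner ℝ ν₂ ν₀ : ℝ) ^ d * F ν₂ := hle
      _ < 1 * F ν₂ := by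
          apply mul_lt_mul_of_pos_right _ hFν₂pos
          exact pow_lt_one₀ htpos.le ht1 (by rw [hddef]; have := hn0 0; omega)
      _ = F ν₂ := one_mul _
  have hge : F ν₂ ≤ F ν₀ := hν₀max ⟨hν₂SK.1, fun i => (hν₂SK.2 i).le⟩
  linarith
end
end
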